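/- arXiv:1408.6414 — 2 statements merged into one kernel-verified Lean document; each statement's English description precedes it below -/
import Mathlib

section
/- Let Λ be a countable group acting on a countable set I. If the action Λ ↷ I admits an invariant mean, then the induced action of Λ on the set J of all nonempty finite subsets of I admits an invariant mean; conversely, if Λ ↷ J admits an invariant mean, then Λ ↷ I admits an invariant mean. -/
structure InvMean {Λ X : Type*} (act : Λ → X → X) where
  m : Set X → ℝ
  nonneg : ∀ A : Set X, 0 ≤ m A
  total : m Set.univ = 1
  additive : ∀ A B : Set X, Disjoint A B → m (A ∪ B) = m A + m B
  invariant : ∀ (g : Λ) (A : Set X), m (act g '' A) = m A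

namespace InvMean

variable {Λ X : Type*} {act : Λ → X → X} (μ : InvMean act)

lemma m_empty : μ.m ∅ = 0 := by
  have := μ.additive ∅ ∅ (by simp)
  simp at this; linarith

lemma m_mono {A B : Set X} (h : A ⊆ B) : μ.m A ≤ μ.m B := by
  have : B = A ∪ (B \ A) := by rw [Set.union_diff_cancel h]
  rw [this, μ.additive _ _ Set.disjoint_sdiff_right]
  have := μ.nonneg (B \ A); linarith

lemma m_partition {α : Type*} [DecidableEq α] (s : Finset α) (P : α → Set X)
    (hd : ∀ a ∈ s, ∀ b ∈ s, a ≠ b → Disjoint (P a) (P b)) :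
    μ.m (⋃ a ∈ s, P a) = ∑ a ∈ s, μ.m (P a) := by
  induction s using Finset.induction_on with
  | empty => simpa using μ.m_empty
  | @insert a s ha ih =>
    rw [Finset.sum_insert ha]
    have hset : (⋃ b ∈ insert a s, P b) = P a ∪ ⋃ b ∈ s, P b := by
      simp [Set.iUnion_iUnion_eq_or_left]
    rw [hset, μ.additive]
    · rw [ih (fun x hx y hy hxy => hd x (Finset.mem_insert_of_mem hx) y
        (Finset.mem_insert_of_mem hy) hxy)]
    · refine Set.disjoint_iUnion₂_right.mpr fun b hb => ?_
      exact hd a (Finset.mem_insert_self a s) b (Finset.mem_insert_of_mem hb)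
        (fun h => ha (h ▸ hb))

/-- The "integral" of a bounded `ℕ`-valued function against `μ`. -/
noncomputable def sval (u : X → ℕ) (M : ℕ) : ℝ :=
  ∑ a ∈ Finset.range (M + 1), (a : ℝ) * μ.m {x | u x = a}

lemma sval_nonneg (u : X → ℕ) (M : ℕ) : 0 ≤ μ.sval u M :=
  Finset.sum_nonneg fun a _ => mul_nonneg (by positivity) (μ.nonneg _)

lemma sval_le {u : X → ℕ} {M M' : ℕ} (hu : ∀ x, u x ≤ M) (h : M ≤ M') :
    μ.sval u M' = μ.sval u M := by
  refine (Finset.sum_subset (by gcongr <;> omega) fun a _ ha => ?_).symm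
  have : {x | u x = a} = ∅ := by
    ext x; simp only [Set.mem_setOf_eq, Set.mem_empty_iff_false, iff_false]
    intro hx
    exact ha (Finset.mem_range.2 (by have := hu x; omega))
  rw [this, μ.m_empty, mul_zero]

lemma sval_congr {u : X → ℕ} {M M' : ℕ} (hu : ∀ x, u x ≤ M) (hu' : ∀ x, u x ≤ M') :
    μ.sval u M = μ.sval u M' := by
  rw [← μ.sval_le hu (le_max_left M M'), ← μ.sval_le hu' (le_max_right M M')]

lemma m_slice₁ {u v : X → ℕ} {N : ℕ} (hv : ∀ x, v x ≤ N) (a : ℕ) :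
    μ.m {x | u x = a} = ∑ b ∈ Finset.range (N + 1), μ.m {x | u x = a ∧ v x = b} := by
  have h := μ.m_partition (Finset.range (N + 1)) (fun b => {x | u x = a ∧ v x = b})
    (fun b _ b' _ hbb' => Set.disjoint_left.2 fun x hx hx' => hbb' (hx.2 ▸ hx'.2 ▸ rfl))
  rw [← h]
  congr 1
  ext x
  simp only [Set.mem_iUnion, Set.mem_setOf_eq, Finset.mem_range]
  constructor
  · intro hx; exact ⟨v x, by have := hv x; omega, hx, rfl⟩
  · rintro ⟨b, _, hx, _⟩; exact hx

lemma m_slice₂ {u v : X → ℕ} {M : ℕ} (hu : ∀ x, u x ≤ M) (b : ℕ) :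
    μ.m {x | v x = b} = ∑ a ∈ Finset.range (M + 1), μ.m {x | u x = a ∧ v x = b} := by
  have h := μ.m_partition (Finset.range (M + 1)) (fun a => {x | u x = a ∧ v x = b})
    (fun a _ a' _ haa' => Set.disjoint_left.2 fun x hx hx' => haa' (hx.1 ▸ hx'.1 ▸ rfl))
  rw [← h]
  congr 1
  ext x
  simp only [Set.mem_iUnion, Set.mem_setOf_eq, Finset.mem_range]
  constructor
  · intro hx; exact ⟨u x, by have := hu x; omega, rfl, hx⟩
  · rintro ⟨a, _, _, hx⟩; exact hx

lemma sval_add {u v : X → ℕ} {M N : ℕ} (hu : ∀ x, u x ≤ M) (hv : ∀ x, v x ≤ N) :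
    μ.sval (fun x => u x + v x) (M + N) = μ.sval u M + μ.sval v N := by
  classical
  have hcell : ∀ c, μ.m {x | u x + v x = c} =
      ∑ p ∈ (Finset.range (M+1) ×ˢ Finset.range (N+1)).filter (fun p => p.1 + p.2 = c),
        μ.m {x | u x = p.1 ∧ v x = p.2} := by
    intro c
    have h := μ.m_partition
      ((Finset.range (M+1) ×ˢ Finset.range (N+1)).filter (fun p => p.1 + p.2 = c))
      (fun p => {x | u x = p.1 ∧ v x = p.2})
      (fun p _ q _ hpq => Set.disjoint_left.2 fun x hx hx' => by
        apply hpq; cases p; cases q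
        simp only [Set.mem_setOf_eq] at hx hx'
        simp [← hx.1, ← hx.2, ← hx'.1, ← hx'.2])
    rw [← h]
    congr 1
    ext x
    simp only [Set.mem_iUnion, Set.mem_setOf_eq, Finset.mem_filter, Finset.mem_product,
      Finset.mem_range]
    constructor
    · intro hx
      exact ⟨(u x, v x), ⟨⟨by have := hu x; omega, by have := hv x; omega⟩, hx⟩, rfl, rfl⟩
    · rintro ⟨p, ⟨_, hc⟩, h1, h2⟩; omega
  unfold sval
  calc ∑ c ∈ Finset.range (M + N + 1), (c : ℝ) * μ.m {x | u x + v x = c}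
      = ∑ c ∈ Finset.range (M + N + 1),
          ∑ p ∈ (Finset.range (M+1) ×ˢ Finset.range (N+1)).filter (fun p => p.1 + p.2 = c),
            ((p.1 + p.2 : ℕ) : ℝ) * μ.m {x | u x = p.1 ∧ v x = p.2} := by
        refine Finset.sum_congr rfl fun c _ => ?_
        rw [hcell c, Finset.mul_sum]
        refine Finset.sum_congr rfl fun p hp => ?_
        have := (Finset.mem_filter.1 hp).2
        rw [this]
    _ = ∑ p ∈ Finset.range (M+1) ×ˢ Finset.range (N+1),
          ((p.1 + p.2 : ℕ) : ℝ) * μ.m {x | u x = p.1 ∧ v x = p.2} := by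
        refine Finset.sum_fiberwise_of_maps_to (fun p hp => ?_) _
        simp only [Finset.mem_product, Finset.mem_range] at hp
        exact Finset.mem_range.2 (by omega)
    _ = ∑ a ∈ Finset.range (M+1), (a : ℝ) * μ.m {x | u x = a}
        + ∑ b ∈ Finset.range (N+1), (b : ℝ) * μ.m {x | v x = b} := by
        rw [Finset.sum_product]
        simp only [Nat.cast_add, add_mul]
        have hsplit : ∀ a ∈ Finset.range (M+1),
            ∑ b ∈ Finset.range (N+1), ((a:ℝ) * μ.m {x | u x = a ∧ v x = b}
              + (b:ℝ) * μ.m {x | u x = a ∧ v x = b})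
            = (a:ℝ) * μ.m {x | u x = a}
              + ∑ b ∈ Finset.range (N+1), (b:ℝ) * μ.m {x | u x = a ∧ v x = b} := by
          intro a _
          rw [Finset.sum_add_distrib, ← Finset.mul_sum, ← μ.m_slice₁ hv a]
        rw [Finset.sum_congr rfl hsplit, Finset.sum_add_distrib]
        congr 1
        rw [Finset.sum_comm]
        refine Finset.sum_congr rfl fun b _ => ?_
        rw [← Finset.mul_sum, ← μ.m_slice₂ hu b]

lemma sval_const (c : ℕ) : μ.sval (fun _ => c) c = c := by
  unfold sval
  rw [Finset.sum_eq_single c]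
  · have : {x : X | c = c} = Set.univ := by ext x; simp
    rw [this, μ.total, mul_one]
  · intro b _ hbc
    have : {x : X | c = b} = ∅ := by
      ext x; simp only [Set.mem_setOf_eq, Set.mem_empty_iff_false, iff_false]
      exact fun h => hbc h.symm
    rw [this, μ.m_empty, mul_zero]
  · intro h; exact absurd (Finset.self_mem_range_succ c) h

lemma sval_mono {u v : X → ℕ} {M : ℕ} (huv : ∀ x, u x ≤ v x) (hv : ∀ x, v x ≤ M) :
    μ.sval u M ≤ μ.sval v M := by
  have hu : ∀ x, u x ≤ M := fun x => (huv x).trans (hv x)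
  have hw : ∀ x, v x - u x ≤ M := fun x => le_trans (Nat.sub_le _ _) (hv x)
  have hfun : (fun x => u x + (v x - u x)) = v := funext fun x => Nat.add_sub_cancel' (huv x)
  have h := μ.sval_add hu hw
  rw [hfun] at h
  have h2 : μ.sval v M = μ.sval v (M + M) := μ.sval_congr hv (fun x => (hv x).trans (by omega))
  rw [h2, h]
  have := μ.sval_nonneg (fun x => v x - u x) M
  linarith

lemma sval_smul {u : X → ℕ} {M : ℕ} (hu : ∀ x, u x ≤ M) (k : ℕ) :
    μ.sval (fun x => k * u x) (k * M) = k * μ.sval u M := by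
  induction k with
  | zero =>
    simp only [Nat.zero_mul, Nat.cast_zero, zero_mul]
    unfold sval
    simp [μ.total]
  | succ k ih =>
    have h1 : (fun x => (k+1) * u x) = fun x => k * u x + u x := by
      funext x; ring
    have h2 : ∀ x, k * u x ≤ k * M := fun x => Nat.mul_le_mul_left k (hu x)
    rw [h1, Nat.succ_mul, μ.sval_add h2 hu, ih]
    push_cast; ring

lemma sval_comp {u : X → ℕ} {M : ℕ} (σ : X → X)
    (hinv : ∀ S : Set X, μ.m (σ ⁻¹' S) = μ.m S) :
    μ.sval (fun x => u (σ x)) M = μ.sval u M := by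
  unfold sval
  refine Finset.sum_congr rfl fun a _ => ?_
  congr 1
  exact hinv {x | u x = a}

/-- Discretized integral of a `[0,1]`-valued function against `μ`. -/
noncomputable def efun (k : ℕ) (f : X → ℝ) : ℝ :=
  μ.sval (fun x => ⌊(k : ℝ) * f x⌋₊) k / k

lemma floor_bd {f : X → ℝ} (hf1 : ∀ x, f x ≤ 1) (k : ℕ) (x : X) :
    ⌊(k : ℝ) * f x⌋₊ ≤ k := by
  refine Nat.floor_le_of_le ?_
  have : (k:ℝ) * f x ≤ (k:ℝ) * 1 := by
    have : (0:ℝ) ≤ k := by positivity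
    nlinarith [hf1 x]
  simpa using this

lemma efun_nonneg (k : ℕ) (f : X → ℝ) : 0 ≤ μ.efun k f :=
  div_nonneg (μ.sval_nonneg _ _) (by positivity)

lemma efun_one {k : ℕ} (hk : 1 ≤ k) : μ.efun k (fun _ => 1) = 1 := by
  unfold efun
  have : (fun x : X => ⌊(k : ℝ) * 1⌋₊) = fun _ => k := by
    funext x; simp
  rw [this, μ.sval_const k, div_self (by positivity)]

lemma efun_comp (k : ℕ) (f : X → ℝ) (σ : X → X)
    (hinv : ∀ S : Set X, μ.m (σ ⁻¹' S) = μ.m S) :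
    μ.efun k (fun x => f (σ x)) = μ.efun k f := by
  unfold efun
  rw [μ.sval_comp (u := fun x => ⌊(k : ℝ) * f x⌋₊) σ hinv]

lemma efun_mul {f : X → ℝ} (hf0 : ∀ x, 0 ≤ f x) (hf1 : ∀ x, f x ≤ 1)
    {k m : ℕ} (hk : 1 ≤ k) (hm : 1 ≤ m) :
    μ.efun k f ≤ μ.efun (k * m) f ∧ μ.efun (k * m) f ≤ μ.efun k f + 1 / k := by
  set u : X → ℕ := fun x => ⌊(k : ℝ) * f x⌋₊ with hu
  set w : X → ℕ := fun x => ⌊((k * m : ℕ) : ℝ) * f x⌋₊ with hw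
  have hkpos : (0:ℝ) < k := by exact_mod_cast hk
  have hmpos : (0:ℝ) < m := by exact_mod_cast hm
  have hub : ∀ x, u x ≤ k := floor_bd hf1 k
  have hwb : ∀ x, w x ≤ k * m := floor_bd hf1 (k * m)
  have hfx : ∀ x, (0:ℝ) ≤ (k:ℝ) * f x := fun x => by
    have := hf0 x; positivity
  have h1 : ∀ x, m * u x ≤ w x := by
    intro x
    refine Nat.le_floor ?_
    have hfl : (u x : ℝ) ≤ (k:ℝ) * f x := Nat.floor_le (hfx x)
    push_cast
    nlinarith
  have h2 : ∀ x, w x ≤ m * u x + m := by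
    intro x
    have h0 : (0:ℝ) ≤ ((k * m : ℕ) : ℝ) * f x := by have := hf0 x; positivity
    have hfl : (k:ℝ) * f x < u x + 1 := Nat.lt_floor_add_one _
    have hlt : w x < m * u x + m := by
      rw [hw]
      refine (Nat.floor_lt h0).2 ?_
      push_cast
      nlinarith
    omega
  have hmub : ∀ x, m * u x ≤ m * k := fun x => Nat.mul_le_mul_left m (hub x)
  have hmub' : ∀ x, m * u x ≤ k * m := fun x => by rw [Nat.mul_comm k m]; exact hmub x
  set A := μ.sval u k with hA
  have hsmul : μ.sval (fun x => m * u x) (m * k) = m * A := μ.sval_smul hub m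
  have hlow : m * A ≤ μ.sval w (k * m) := by
    have := μ.sval_mono h1 hwb
    rwa [μ.sval_congr hmub' hmub, hsmul] at this
  have hupp : μ.sval w (k * m) ≤ m * A + m := by
    have hwb' : ∀ x, w x ≤ m * k + m := fun x =>
      (hwb x).trans (by rw [Nat.mul_comm k m]; exact Nat.le_add_right _ _)
    have hvb' : ∀ x, m * u x + m ≤ m * k + m := fun x => by have := hmub x; omega
    have hmono := μ.sval_mono (v := fun x => m * u x + m) h2 hvb'
    have hcongr : μ.sval w (k * m) = μ.sval w (m * k + m) :=
      μ.sval_congr hwb hwb'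
    have hadd : μ.sval (fun x => m * u x + m) (m * k + m) =
        μ.sval (fun x => m * u x) (m * k) + μ.sval (fun _ => m) m :=
      μ.sval_add hmub (fun _ => le_rfl)
    rw [hcongr]
    calc μ.sval w (m * k + m) ≤ μ.sval (fun x => m * u x + m) (m * k + m) := hmono
      _ = m * A + m := by rw [hadd, hsmul, μ.sval_const]
  have hAnn : 0 ≤ A := μ.sval_nonneg _ _
  set B := μ.sval w (k * m) with hB
  have hBnn : 0 ≤ B := μ.sval_nonneg _ _
  have hek : μ.efun k f = A / k := rfl
  have hekm : μ.efun (k * m) f = B / ((k * m : ℕ) : ℝ) := rfl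
  have hcast : ((k * m : ℕ) : ℝ) = (k : ℝ) * m := by push_cast; ring
  rw [hek, hekm, hcast]
  have hkmpos : (0:ℝ) < (k : ℝ) * m := by positivity
  constructor
  · rw [div_le_div_iff₀ hkpos hkmpos]
    nlinarith
  · rw [div_add_div _ _ (ne_of_gt hkpos) (ne_of_gt hkpos),
      div_le_div_iff₀ hkmpos (by positivity : (0:ℝ) < (k:ℝ) * k)]
    nlinarith

lemma efun_add {f g : X → ℝ} (hf0 : ∀ x, 0 ≤ f x) (hg0 : ∀ x, 0 ≤ g x)
    (hfg1 : ∀ x, f x + g x ≤ 1) {k : ℕ} (hk : 1 ≤ k) :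
    μ.efun k f + μ.efun k g ≤ μ.efun k (fun x => f x + g x) ∧
    μ.efun k (fun x => f x + g x) ≤ μ.efun k f + μ.efun k g + 1 / k := by
  have hkpos : (0:ℝ) < k := by exact_mod_cast hk
  set u : X → ℕ := fun x => ⌊(k : ℝ) * f x⌋₊ with hu
  set v : X → ℕ := fun x => ⌊(k : ℝ) * g x⌋₊ with hv
  set w : X → ℕ := fun x => ⌊(k : ℝ) * (f x + g x)⌋₊ with hw
  have hf1 : ∀ x, f x ≤ 1 := fun x => by have := hg0 x; have := hfg1 x; linarith
  have hg1 : ∀ x, g x ≤ 1 := fun x => by have := hf0 x; have := hfg1 x; linarith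
  have hub : ∀ x, u x ≤ k := floor_bd hf1 k
  have hvb : ∀ x, v x ≤ k := floor_bd hg1 k
  have hwb : ∀ x, w x ≤ k := floor_bd hfg1 k
  have h1 : ∀ x, u x + v x ≤ w x := by
    intro x
    refine Nat.le_floor ?_
    have hflu : (u x : ℝ) ≤ (k:ℝ) * f x := Nat.floor_le (by have := hf0 x; positivity)
    have hflv : (v x : ℝ) ≤ (k:ℝ) * g x := Nat.floor_le (by have := hg0 x; positivity)
    push_cast
    nlinarith
  have h2 : ∀ x, w x ≤ u x + v x + 1 := by
    intro x
    have h0 : (0:ℝ) ≤ (k : ℝ) * (f x + g x) := by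
      have := hf0 x; have := hg0 x; positivity
    have hflu : (k:ℝ) * f x < u x + 1 := Nat.lt_floor_add_one _
    have hflv : (k:ℝ) * g x < v x + 1 := Nat.lt_floor_add_one _
    have hlt : w x < u x + v x + 2 := by
      rw [hw]
      refine (Nat.floor_lt h0).2 ?_
      push_cast
      nlinarith
    omega
  have huvb : ∀ x, u x + v x ≤ k := fun x => (h1 x).trans (hwb x)
  set A := μ.sval u k with hA
  set B := μ.sval v k with hB
  set C := μ.sval w k with hC
  have hadd : μ.sval (fun x => u x + v x) (k + k) = A + B := μ.sval_add hub hvb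
  have hcongr : μ.sval (fun x => u x + v x) k = μ.sval (fun x => u x + v x) (k + k) :=
    μ.sval_congr huvb (fun x => (huvb x).trans (by omega))
  have hlow : A + B ≤ C := by
    have := μ.sval_mono h1 hwb
    rwa [hcongr, hadd] at this
  have hupp : C ≤ A + B + 1 := by
    have hwb' : ∀ x, w x ≤ k + 1 := fun x => (hwb x).trans (by omega)
    have hvb' : ∀ x, u x + v x + 1 ≤ k + 1 := fun x => by have := huvb x; omega
    have hmono := μ.sval_mono (v := fun x => u x + v x + 1) h2 hvb'
    have hcongr2 : C = μ.sval w (k + 1) := μ.sval_congr hwb hwb'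
    have hadd2 : μ.sval (fun x => u x + v x + 1) (k + k + 1) =
        μ.sval (fun x => u x + v x) (k + k) + μ.sval (fun _ => 1) 1 :=
      μ.sval_add (fun x => huvb x |>.trans (by omega)) (fun _ => le_rfl)
    have hcongr3 : μ.sval (fun x => u x + v x + 1) (k + 1) =
        μ.sval (fun x => u x + v x + 1) (k + k + 1) :=
      μ.sval_congr (fun x => by have := huvb x; omega) (fun x => by have := huvb x; omega)
    rw [hcongr2]
    calc μ.sval w (k + 1) ≤ μ.sval (fun x => u x + v x + 1) (k + 1) := hmono
      _ = A + B + 1 := by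
          rw [hcongr3, hadd2]
          have hone : μ.sval (fun _ : X => (1:ℕ)) 1 = 1 := by
            simpa using μ.sval_const 1
          rw [hadd, hone]
  have he1 : μ.efun k f = A / k := rfl
  have he2 : μ.efun k g = B / k := rfl
  have he3 : μ.efun k (fun x => f x + g x) = C / k := rfl
  rw [he1, he2, he3]
  constructor
  · rw [div_add_div _ _ (ne_of_gt hkpos) (ne_of_gt hkpos), div_le_div_iff₀ (by positivity) hkpos]
    nlinarith
  · rw [div_add_div _ _ (ne_of_gt hkpos) (ne_of_gt hkpos),
      div_add_div _ _ (by positivity : ((k:ℝ)*k) ≠ 0) (ne_of_gt hkpos),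
      div_le_div_iff₀ hkpos (by positivity)]
    have h3 : (0:ℝ) < (k:ℝ) * (k:ℝ) * (k:ℝ) := by positivity
    nlinarith [mul_le_mul_of_nonneg_right hupp h3.le]

end InvMean

section MainProof

open Filter

variable {Λ I : Type*} [Group Λ] [DecidableEq I] [MulAction Λ I]

/-- The density of `A` inside a nonempty finite subset `F`. -/
private noncomputable def phi (A : Set I) (F : {F : Finset I // F.Nonempty}) : ℝ :=
  ((A ∩ (F.1 : Set I)).ncard : ℝ) / (F.1.card : ℝ)

private lemma phi_nonneg (A : Set I) (F : {F : Finset I // F.Nonempty}) : 0 ≤ phi A F :=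
  div_nonneg (by positivity) (by positivity)

private lemma card_pos' (F : {F : Finset I // F.Nonempty}) : (0:ℝ) < (F.1.card : ℝ) := by
  exact_mod_cast Finset.card_pos.2 F.2

private lemma phi_le_one (A : Set I) (F : {F : Finset I // F.Nonempty}) : phi A F ≤ 1 := by
  unfold phi
  rw [div_le_one (card_pos' F)]
  have h : (A ∩ (F.1 : Set I)).ncard ≤ ((F.1 : Set I)).ncard :=
    Set.ncard_le_ncard Set.inter_subset_right (F.1.finite_toSet)
  rw [Set.ncard_coe_finset] at h
  exact_mod_cast h

private lemma phi_univ (F : {F : Finset I // F.Nonempty}) : phi Set.univ F = 1 := by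
  unfold phi
  rw [Set.univ_inter, Set.ncard_coe_finset, div_self (ne_of_gt (card_pos' F))]

private lemma phi_add {A B : Set I} (hd : Disjoint A B) (F : {F : Finset I // F.Nonempty}) :
    phi (A ∪ B) F = phi A F + phi B F := by
  unfold phi
  rw [← add_div]
  congr 1
  rw [Set.union_inter_distrib_right]
  have h := Set.ncard_union_eq (Set.disjoint_of_subset Set.inter_subset_left
      Set.inter_subset_left hd)
    (F.1.finite_toSet.subset Set.inter_subset_right)
    (F.1.finite_toSet.subset Set.inter_subset_right)
  rw [h]
  push_cast
  ring

private lemma phi_equivariant (g : Λ) (A : Set I) (F : {F : Finset I // F.Nonempty}) :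
    phi ((fun i => g • i) '' A) F
      = phi A ⟨F.1.image (fun i => g⁻¹ • i), F.2.image _⟩ := by
  unfold phi
  have hinj : Function.Injective (fun i : I => g • i) := MulAction.injective g
  have hinj' : Function.Injective (fun i : I => g⁻¹ • i) := MulAction.injective g⁻¹
  have hden : ((F.1.image (fun i => g⁻¹ • i)).card : ℝ) = (F.1.card : ℝ) := by
    rw [Finset.card_image_of_injective _ hinj']
  rw [hden]
  congr 1
  have himg : (fun i : I => g • i) '' (A ∩ ((F.1.image (fun i => g⁻¹ • i) : Finset I) : Set I))
      = ((fun i => g • i) '' A) ∩ (F.1 : Set I) := by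
    rw [Set.image_inter hinj]
    congr 1
    rw [Finset.coe_image, ← Set.image_comp]
    have : ((fun i : I => g • i) ∘ fun i : I => g⁻¹ • i) = id := by
      funext i; simp [smul_inv_smul]
    rw [this, Set.image_id]
  rw [← himg, Set.ncard_image_of_injective _ hinj]

private lemma jact_inv_jact (g : Λ) (F : {F : Finset I // F.Nonempty}) :
    (⟨(Finset.image (fun i => g • i) F.1).image (fun i => g⁻¹ • i),
        (F.2.image _).image _⟩ : {F : Finset I // F.Nonempty})
      = F := by
  apply Subtype.ext
  show (F.1.image (fun i => g • i)).image (fun i => g⁻¹ • i) = F.1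
  rw [Finset.image_image]
  have : ((fun i : I => g⁻¹ • i) ∘ fun i : I => g • i) = id := by
    funext i; simp [inv_smul_smul]
  rw [this, Finset.image_id]

private lemma exists_mean_I
    (n : InvMean (fun (g : Λ) (F : {F : Finset I // F.Nonempty}) =>
      (⟨F.1.image (fun i => g • i), F.2.image _⟩ : {F : Finset I // F.Nonempty}))) :
    Nonempty (InvMean (fun (g : Λ) (i : I) => g • i)) := by
  classical
  -- the approximating sequence
  set a : Set I → ℕ → ℝ := fun A k => n.efun (k + 1) (phi A) with ha
  have hbound : ∀ (A : Set I) (k m : ℕ), |a A k - a A m| ≤ 1 / (k+1) + 1 / (m+1) := by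
    intro A k m
    have h1 := n.efun_mul (phi_nonneg A) (phi_le_one A)
      (k := k+1) (m := m+1) (by omega) (by omega)
    have h2 := n.efun_mul (phi_nonneg A) (phi_le_one A)
      (k := m+1) (m := k+1) (by omega) (by omega)
    rw [Nat.mul_comm (m+1) (k+1)] at h2
    rw [abs_le]
    have e1 : ((k:ℝ)+1) = ((k+1 : ℕ) : ℝ) := by push_cast; ring
    have e2 : ((m:ℝ)+1) = ((m+1 : ℕ) : ℝ) := by push_cast; ring
    rw [e1, e2]
    constructor <;> [skip; skip] <;>
      · simp only [ha]
        have c1 := h1.1; have c2 := h1.2; have c3 := h2.1; have c4 := h2.2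
        have p1 : (0:ℝ) < ((k+1:ℕ):ℝ) := by positivity
        have p2 : (0:ℝ) < ((m+1:ℕ):ℝ) := by positivity
        have q1 : (0:ℝ) ≤ 1 / ((k+1:ℕ):ℝ) := by positivity
        have q2 : (0:ℝ) ≤ 1 / ((m+1:ℕ):ℝ) := by positivity
        linarith
  have hcauchy : ∀ A : Set I, CauchySeq (a A) := by
    intro A
    refine cauchySeq_of_le_tendsto_0 (fun N => 2 / (N+1)) (fun k m N hk hm => ?_) ?_
    · rw [Real.dist_eq]
      refine (hbound A k m).trans ?_
      have h1 : 1 / ((k:ℝ)+1) ≤ 1 / ((N:ℝ)+1) := by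
        apply one_div_le_one_div_of_le (by positivity)
        exact_mod_cast Nat.succ_le_succ hk
      have h2 : 1 / ((m:ℝ)+1) ≤ 1 / ((N:ℝ)+1) := by
        apply one_div_le_one_div_of_le (by positivity)
        exact_mod_cast Nat.succ_le_succ hm
      have : 1 / ((N:ℝ)+1) + 1 / ((N:ℝ)+1) = 2 / ((N:ℝ)+1) := by ring
      linarith
    · have h0 : Tendsto (fun N : ℕ => 1 / ((N:ℝ)+1)) atTop (nhds 0) :=
        tendsto_one_div_add_atTop_nhds_zero_nat
      have := h0.const_mul (2:ℝ)
      simp only [mul_zero] at this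
      convert this using 2 with N
      ring
  have hconv : ∀ A : Set I, ∃ L, Tendsto (a A) atTop (nhds L) := fun A =>
    cauchySeq_tendsto_of_complete (hcauchy A)
  choose L hL using hconv
  refine ⟨⟨L, ?_, ?_, ?_, ?_⟩⟩
  · -- nonneg
    intro A
    exact ge_of_tendsto' (hL A) (fun k => n.efun_nonneg _ _)
  · -- total
    have h1 : ∀ k, a Set.univ k = 1 := by
      intro k
      have : phi (Set.univ : Set I) = fun _ => 1 := funext phi_univ
      simp only [ha, this]
      exact n.efun_one (by omega)
    have : Tendsto (a Set.univ) atTop (nhds 1) := by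
      rw [funext h1]; exact tendsto_const_nhds
    exact tendsto_nhds_unique (hL Set.univ) this
  · -- additive
    intro A B hd
    have hphiadd : phi (A ∪ B) = fun F => phi A F + phi B F := funext (phi_add hd)
    have hsand : ∀ k : ℕ, a A k + a B k ≤ a (A ∪ B) k ∧
        a (A ∪ B) k ≤ a A k + a B k + 1 / ((k+1 : ℕ) : ℝ) := by
      intro k
      have h := n.efun_add (f := phi A) (g := phi B) (phi_nonneg A) (phi_nonneg B)
        (fun F => by rw [← phi_add hd]; exact phi_le_one _ F) (k := k+1) (by omega)
      simp only [ha, hphiadd]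
      exact h
    have hup : Tendsto (fun k => a A k + a B k + 1 / ((k+1 : ℕ) : ℝ)) atTop
        (nhds (L A + L B)) := by
      have h1 : Tendsto (fun k : ℕ => 1 / ((k+1 : ℕ) : ℝ)) atTop (nhds 0) := by
        have := (tendsto_one_div_add_atTop_nhds_zero_nat :
          Tendsto (fun n : ℕ => 1 / ((n : ℝ) + 1)) atTop (nhds 0))
        convert this using 2 with k
        push_cast; ring
      have := ((hL A).add (hL B)).add h1
      simpa using this
    have hlo : Tendsto (fun k => a A k + a B k) atTop (nhds (L A + L B)) :=
      (hL A).add (hL B)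
    have : Tendsto (a (A ∪ B)) atTop (nhds (L A + L B)) :=
      tendsto_of_tendsto_of_tendsto_of_le_of_le hlo hup
        (fun k => (hsand k).1) (fun k => (hsand k).2)
    exact tendsto_nhds_unique (hL (A ∪ B)) this
  · -- invariant
    intro g A
    have hseq : a ((fun i : I => g • i) '' A) = a A := by
      funext k
      simp only [ha]
      have hphi : phi ((fun i : I => g • i) '' A)
          = fun F => phi A (⟨F.1.image (fun i => g⁻¹ • i), F.2.image _⟩ :
              {F : Finset I // F.Nonempty}) := funext (phi_equivariant g A)
      rw [hphi]
      refine n.efun_comp (k+1) (phi A)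
        (fun F => ⟨F.1.image (fun i => g⁻¹ • i), F.2.image _⟩) ?_
      intro S
      have himg : (fun F : {F : Finset I // F.Nonempty} =>
            (⟨F.1.image (fun i => g⁻¹ • i), F.2.image _⟩ : {F : Finset I // F.Nonempty}))
            ⁻¹' S
          = (fun F : {F : Finset I // F.Nonempty} =>
            (⟨F.1.image (fun i => g • i), F.2.image _⟩ : {F : Finset I // F.Nonempty})) '' S := by
        ext F
        simp only [Set.mem_preimage, Set.mem_image]
        constructor
        · intro hF
          refine ⟨_, hF, ?_⟩
          have := jact_inv_jact g⁻¹ F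
          simpa [inv_inv] using this
        · rintro ⟨G, hG, rfl⟩
          convert hG using 2
          exact congrArg Subtype.val (jact_inv_jact g G)
      rw [himg]
      exact n.invariant g S
    have h1 : Tendsto (a ((fun i : I => g • i) '' A)) atTop (nhds (L A)) := by
      rw [hseq]; exact hL A
    exact tendsto_nhds_unique (hL _) h1

private lemma exists_mean_J
    (mu : InvMean (fun (g : Λ) (i : I) => g • i)) :
    Nonempty (InvMean (fun (g : Λ) (F : {F : Finset I // F.Nonempty}) =>
      (⟨F.1.image (fun i => g • i), F.2.image _⟩ : {F : Finset I // F.Nonempty}))) := by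
  classical
  set sing : I → {F : Finset I // F.Nonempty} :=
    fun i => ⟨{i}, Finset.singleton_nonempty i⟩ with hsing
  refine ⟨⟨fun A => mu.m (sing ⁻¹' A), fun A => mu.nonneg _, ?_, ?_, ?_⟩⟩
  · show mu.m (sing ⁻¹' Set.univ) = 1
    rw [Set.preimage_univ]; exact mu.total
  · intro A B hd
    show mu.m (sing ⁻¹' (A ∪ B)) = mu.m (sing ⁻¹' A) + mu.m (sing ⁻¹' B)
    rw [Set.preimage_union]
    exact mu.additive _ _ (hd.preimage sing)
  · intro g A
    have key : sing ⁻¹' ((fun F : {F : Finset I // F.Nonempty} =>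
          (⟨F.1.image (fun i => g • i), F.2.image _⟩ : {F : Finset I // F.Nonempty})) '' A)
        = (fun i : I => g • i) '' (sing ⁻¹' A) := by
      ext i
      simp only [Set.mem_preimage, Set.mem_image]
      constructor
      · rintro ⟨G, hG, hGi⟩
        refine ⟨g⁻¹ • i, ?_, by simp [smul_inv_smul]⟩
        have : G = sing (g⁻¹ • i) := by
          have h2 := congrArg (fun F : {F : Finset I // F.Nonempty} =>
            (⟨F.1.image (fun j => g⁻¹ • j), F.2.image _⟩ : {F : Finset I // F.Nonempty})) hGi
          simp only at h2
          rw [jact_inv_jact g G] at h2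
          rw [h2]
          apply Subtype.ext
          show (sing i).1.image (fun j => g⁻¹ • j) = {g⁻¹ • i}
          simp [hsing]
        rwa [← this]
      · rintro ⟨j, hj, rfl⟩
        refine ⟨sing j, hj, ?_⟩
        apply Subtype.ext
        show ({j} : Finset I).image (fun i => g • i) = {g • j}
        simp
    show mu.m (sing ⁻¹' ((fun F : {F : Finset I // F.Nonempty} =>
        (⟨F.1.image (fun i => g • i), F.2.image _⟩ : {F : Finset I // F.Nonempty})) '' A))
      = mu.m (sing ⁻¹' A)
    rw [key]
    exact mu.invariant g (sing ⁻¹' A)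

end MainProof

/-- For a countable group `Λ` acting on a countable set `I`, the action `Λ ↷ I` admits
an invariant mean if and only if the induced action of `Λ` on the set `J` of nonempty
finite subsets of `I` admits an invariant mean. -/
theorem invariant_mean_iff_invariant_mean_finite_subsets
    {Λ I : Type*} [Group Λ] [Countable Λ] [Countable I] [DecidableEq I] [MulAction Λ I] :
    Nonempty (InvMean (fun (g : Λ) (i : I) => g • i)) ↔
    Nonempty (InvMean (fun (g : Λ) (F : {F : Finset I // F.Nonempty}) =>
      (⟨F.1.image (fun i => g • i), F.2.image _⟩ : {F : Finset I // F.Nonempty}))) := by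
  constructor
  · rintro ⟨mu⟩
    exact exists_mean_J mu
  · rintro ⟨n⟩
    exact exists_mean_I n
end

section
/- Let Λ be a group acting on a countable set X. If the unitary representation of Λ on ℓ²(X) given by (g·ξ)(x) = ξ(g⁻¹·x) admits a sequence of almost invariant unit vectors, then the action Λ ↷ X admits an invariant mean. Conversely, if Λ ↷ X admits an invariant mean, then ℓ²(X) admits almost invariant unit vectors. -/
open Set

section MeanIntegral

variable {X : Type*}

variable (m : Set X → ℝ)

open Classical in
/-- integral of a finite-range function against a finitely additive mean -/
noncomputable def simpInt (h : X → ℝ) : ℝ :=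
  if hfin : (Set.range h).Finite then ∑ c ∈ hfin.toFinset, c * m (h ⁻¹' {c}) else 0

variable (hm0 : ∀ A : Set X, 0 ≤ m A)
  (hmadd : ∀ A B : Set X, Disjoint A B → m (A ∪ B) = m A + m B)

section
include hmadd

lemma m_empty : m ∅ = 0 := by
  have := hmadd ∅ ∅ (disjoint_bot_left)
  simp at this; linarith

lemma m_biUnion {ι : Type*} (s : Finset ι) (A : ι → Set X)
    (hdis : ∀ i ∈ s, ∀ j ∈ s, i ≠ j → Disjoint (A i) (A j)) :
    m (⋃ i ∈ s, A i) = ∑ i ∈ s, m (A i) := by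
  classical
  induction s using Finset.induction with
  | empty => simpa using m_empty m hmadd
  | @insert a s hx ih =>
    rw [Finset.set_biUnion_insert, Finset.sum_insert hx,
      hmadd _ _ ?_, ih ?_]
    · intro i hi j hj hij
      exact hdis i (Finset.mem_insert_of_mem hi) j (Finset.mem_insert_of_mem hj) hij
    · apply Set.disjoint_iUnion_right.2
      intro i
      apply Set.disjoint_iUnion_right.2
      intro hi
      exact hdis a (Finset.mem_insert_self a s) i (Finset.mem_insert_of_mem hi)
        (by rintro rfl; exact hx hi)

lemma simpInt_eq {h : X → ℝ} (hfin : (Set.range h).Finite) (s : Finset ℝ)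
    (hs : ∀ x, h x ∈ s) : simpInt m h = ∑ c ∈ s, c * m (h ⁻¹' {c}) := by
  classical
  rw [simpInt, dif_pos hfin]
  apply Finset.sum_subset
  · intro c hc
    rw [Set.Finite.mem_toFinset] at hc
    obtain ⟨x, rfl⟩ := hc
    exact hs x
  · intro c _ hc
    rw [Set.Finite.mem_toFinset] at hc
    have : h ⁻¹' {c} = ∅ := by
      ext x; simp only [Set.mem_preimage, Set.mem_singleton_iff, Set.mem_empty_iff_false,
        iff_false]
      rintro rfl; exact hc ⟨x, rfl⟩
    rw [this, m_empty m hmadd, mul_zero]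

lemma simpInt_add {h k : X → ℝ} (hh : (Set.range h).Finite) (hk : (Set.range k).Finite) :
    simpInt m (fun x => h x + k x) = simpInt m h + simpInt m k := by
  classical
  set sh := hh.toFinset with hsh
  set sk := hk.toFinset with hsk
  have hmem_h : ∀ x, h x ∈ sh := fun x => hh.mem_toFinset.2 ⟨x, rfl⟩
  have hmem_k : ∀ x, k x ∈ sk := fun x => hk.mem_toFinset.2 ⟨x, rfl⟩
  -- the partition pieces
  set P : ℝ × ℝ → Set X := fun p => h ⁻¹' {p.1} ∩ k ⁻¹' {p.2} with hP
  have hPdis : ∀ p q : ℝ × ℝ, p ≠ q → Disjoint (P p) (P q) := by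
    intro p q hpq
    rw [Set.disjoint_left]
    rintro x ⟨hx1, hx2⟩ ⟨hy1, hy2⟩
    apply hpq
    ext
    · simp only [Set.mem_preimage, Set.mem_singleton_iff] at hx1 hy1; rw [← hx1, ← hy1]
    · simp only [Set.mem_preimage, Set.mem_singleton_iff] at hx2 hy2; rw [← hx2, ← hy2]
  -- decompose h-level sets
  have hdech : ∀ c : ℝ, m (h ⁻¹' {c}) = ∑ d ∈ sk, m (P (c, d)) := by
    intro c
    rw [← m_biUnion m hmadd sk (fun d => P (c, d))
      (fun i _ j _ hij => hPdis _ _ (by simpa using hij))]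
    congr 1
    ext x
    simp only [Set.mem_iUnion, Set.mem_preimage, Set.mem_singleton_iff, hP, Set.mem_inter_iff]
    constructor
    · intro hx; exact ⟨k x, hmem_k x, hx, rfl⟩
    · rintro ⟨d, _, hx, _⟩; exact hx
  have hdeck : ∀ d : ℝ, m (k ⁻¹' {d}) = ∑ c ∈ sh, m (P (c, d)) := by
    intro d
    rw [← m_biUnion m hmadd sh (fun c => P (c, d))
      (fun i _ j _ hij => hPdis _ _ (by simpa using hij))]
    congr 1
    ext x
    simp only [Set.mem_iUnion, Set.mem_preimage, Set.mem_singleton_iff, hP, Set.mem_inter_iff]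
    constructor
    · intro hx; exact ⟨h x, hmem_h x, rfl, hx⟩
    · rintro ⟨c, _, _, hx⟩; exact hx
  -- the sum-set
  set se : Finset ℝ := (sh ×ˢ sk).image (fun p => p.1 + p.2) with hse
  have hfinsum : (Set.range (fun x => h x + k x)).Finite := by
    refine Set.Finite.subset se.finite_toSet ?_
    rintro c ⟨x, rfl⟩
    exact Finset.mem_coe.mpr (Finset.mem_image.2
      ⟨(h x, k x), Finset.mem_product.2 ⟨hmem_h x, hmem_k x⟩, rfl⟩)
  have hdece : ∀ e : ℝ, m ((fun x => h x + k x) ⁻¹' {e}) =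
      ∑ p ∈ (sh ×ˢ sk).filter (fun p => p.1 + p.2 = e), m (P p) := by
    intro e
    rw [← m_biUnion m hmadd _ P (fun i _ j _ hij => hPdis _ _ hij)]
    congr 1
    ext x
    simp only [Set.mem_iUnion, Set.mem_preimage, Set.mem_singleton_iff, hP, Set.mem_inter_iff,
      Finset.mem_filter, Finset.mem_product]
    constructor
    · intro hx; exact ⟨(h x, k x), ⟨⟨hmem_h x, hmem_k x⟩, hx⟩, rfl, rfl⟩
    · rintro ⟨p, ⟨_, hpe⟩, hx1, hx2⟩
      rw [show h x = p.1 from hx1, show k x = p.2 from hx2]; exact hpe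
  rw [simpInt_eq m hmadd hfinsum se (fun x => by
        simp only [hse, Finset.mem_image, Finset.mem_product]
        exact ⟨(h x, k x), by simp [hmem_h x, hmem_k x]⟩),
    simpInt_eq m hmadd hh sh hmem_h, simpInt_eq m hmadd hk sk hmem_k]
  have lhs_eq : ∑ c ∈ se, c * m ((fun x => h x + k x) ⁻¹' {c})
      = ∑ p ∈ sh ×ˢ sk, (p.1 + p.2) * m (P p) := by
    rw [← Finset.sum_fiberwise_of_maps_to (g := fun p : ℝ × ℝ => p.1 + p.2)
      (t := se) (fun p hp => Finset.mem_image_of_mem _ hp) (fun p => (p.1 + p.2) * m (P p))]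
    apply Finset.sum_congr rfl
    intro e _
    rw [hdece e, Finset.mul_sum]
    apply Finset.sum_congr rfl
    intro p hp
    rw [Finset.mem_filter] at hp
    rw [hp.2]
  rw [lhs_eq]
  have rhs1 : ∑ c ∈ sh, c * m (h ⁻¹' {c}) = ∑ p ∈ sh ×ˢ sk, p.1 * m (P p) := by
    rw [Finset.sum_product]
    apply Finset.sum_congr rfl
    intro c _
    rw [hdech c, Finset.mul_sum]
  have rhs2 : ∑ d ∈ sk, d * m (k ⁻¹' {d}) = ∑ p ∈ sh ×ˢ sk, p.2 * m (P p) := by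
    rw [Finset.sum_product_right]
    apply Finset.sum_congr rfl
    intro d _
    rw [hdeck d, Finset.mul_sum]
  rw [rhs1, rhs2, ← Finset.sum_add_distrib]
  apply Finset.sum_congr rfl
  intro p _
  ring

end

include hm0 in
lemma simpInt_nonneg {h : X → ℝ} (hpos : ∀ x, 0 ≤ h x) : 0 ≤ simpInt m h := by
  rw [simpInt]
  split
  · apply Finset.sum_nonneg
    intro c hc
    rw [Set.Finite.mem_toFinset] at hc
    obtain ⟨x, rfl⟩ := hc
    exact mul_nonneg (hpos x) (hm0 _)
  · exact le_refl 0


lemma finRange_comp {h : X → ℝ} (hh : (Set.range h).Finite) (σ : X → X) :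
    (Set.range (fun x => h (σ x))).Finite :=
  hh.subset (by rintro c ⟨x, rfl⟩; exact ⟨σ x, rfl⟩)

lemma finRange_neg {h : X → ℝ} (hh : (Set.range h).Finite) :
    (Set.range (fun x => -(h x))).Finite := by
  have : Set.range (fun x => -(h x)) ⊆ (fun c : ℝ => -c) '' Set.range h := by
    rintro c ⟨x, rfl⟩; exact ⟨h x, ⟨x, rfl⟩, rfl⟩
  exact (hh.image _).subset this

lemma finRange_add {h k : X → ℝ} (hh : (Set.range h).Finite) (hk : (Set.range k).Finite) :
    (Set.range (fun x => h x + k x)).Finite := by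
  have : Set.range (fun x => h x + k x) ⊆
      Set.image2 (· + ·) (Set.range h) (Set.range k) := by
    rintro c ⟨x, rfl⟩; exact ⟨h x, ⟨x, rfl⟩, k x, ⟨x, rfl⟩, rfl⟩
  exact (hh.image2 _ hk).subset this

lemma finRange_const (c : ℝ) : (Set.range (fun _ : X => c)).Finite :=
  (Set.finite_singleton c).subset (by rintro d ⟨x, rfl⟩; exact rfl)

section
include hmadd


lemma simpInt_const (c : ℝ) : simpInt m (fun _ : X => c) = c * m Set.univ := by
  rw [simpInt_eq m hmadd (finRange_const c) {c} (fun x => Finset.mem_singleton_self c)]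
  simp only [Finset.sum_singleton]
  have : ((fun _ : X => c) ⁻¹' {c}) = Set.univ := by ext x; simp
  rw [this]

lemma simpInt_neg {h : X → ℝ} (hh : (Set.range h).Finite) :
    simpInt m (fun x => -(h x)) = - simpInt m h := by
  have h0 : simpInt m (fun x => h x + -(h x)) = simpInt m h + simpInt m (fun x => -(h x)) :=
    simpInt_add m hmadd hh (finRange_neg hh)
  have h1 : (fun x : X => h x + -(h x)) = fun _ : X => (0:ℝ) := by funext x; ring
  rw [h1, simpInt_const m hmadd, zero_mul] at h0
  linarith

include hm0

lemma simpInt_mono {h k : X → ℝ} (hh : (Set.range h).Finite) (hk : (Set.range k).Finite)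
    (hle : ∀ x, h x ≤ k x) : simpInt m h ≤ simpInt m k := by
  have hd : (Set.range (fun x => k x + -(h x))).Finite := finRange_add hk (finRange_neg hh)
  have h0 : simpInt m (fun x => h x + (k x + -(h x)))
      = simpInt m h + simpInt m (fun x => k x + -(h x)) := simpInt_add m hmadd hh hd
  have h1 : (fun x : X => h x + (k x + -(h x))) = k := by funext x; ring
  rw [h1] at h0
  have h2 : 0 ≤ simpInt m (fun x => k x + -(h x)) :=
    simpInt_nonneg m hm0 (fun x => by have := hle x; linarith)
  linarith

end

include hmadd in
/-- integral against a composition with a measure-preserving bijection -/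
lemma simpInt_comp {h : X → ℝ} (hh : (Set.range h).Finite) (σ : X ≃ X)
    (hminv : ∀ A : Set X, m (⇑σ ⁻¹' A) = m A) :
    simpInt m (fun x => h (σ x)) = simpInt m h := by
  classical
  have hc : (Set.range (fun x => h (σ x))).Finite := finRange_comp hh σ
  have hmem : ∀ x, h (σ x) ∈ hh.toFinset := fun x => hh.mem_toFinset.2 ⟨σ x, rfl⟩
  rw [simpInt_eq m hmadd hc hh.toFinset hmem,
    simpInt_eq m hmadd hh hh.toFinset (fun x => hh.mem_toFinset.2 ⟨x, rfl⟩)]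
  apply Finset.sum_congr rfl
  intro c _
  congr 1
  rw [← hminv (h ⁻¹' {c})]
  rfl

lemma finRange_sum' {ι : Type*} (s : Finset ι) (f : ι → X → ℝ)
    (hf : ∀ i ∈ s, (Set.range (f i)).Finite) :
    (Set.range (fun x => ∑ i ∈ s, f i x)).Finite := by
  classical
  induction s using Finset.induction with
  | empty =>
    simp only [Finset.sum_empty]
    exact (Set.finite_singleton (0:ℝ)).subset (by rintro c ⟨x, rfl⟩; rfl)
  | @insert a s ha ih =>
    simp only [Finset.sum_insert ha]
    exact finRange_add (hf a (Finset.mem_insert_self a s))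
      (ih (fun i hi => hf i (Finset.mem_insert_of_mem hi)))

include hmadd in
lemma simpInt_sum {ι : Type*} (s : Finset ι) (f : ι → X → ℝ)
    (hf : ∀ i ∈ s, (Set.range (f i)).Finite) :
    simpInt m (fun x => ∑ i ∈ s, f i x) = ∑ i ∈ s, simpInt m (f i) := by
  classical
  induction s using Finset.induction with
  | empty =>
    simp only [Finset.sum_empty]
    rw [simpInt_const m hmadd 0, zero_mul]
  | @insert a s ha ih =>
    simp only [Finset.sum_insert ha]
    rw [simpInt_add m hmadd (hf a (Finset.mem_insert_self a s))
      (finRange_sum' s f (fun i hi => hf i (Finset.mem_insert_of_mem hi))),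
      ih (fun i hi => hf i (Finset.mem_insert_of_mem hi))]

end MeanIntegral

section Day

variable {Λ X : Type*} [Group Λ] [MulAction Λ X]

open scoped ENNReal
open scoped Classical

private noncomputable abbrev E' (X : Type*) := lp (fun _ : X => ℝ) 1

lemma summable_shift {f : X → ℝ} (hf : Summable f) (g : Λ) :
    Summable (fun x => f (g • x)) :=
  (Equiv.summable_iff (MulAction.toPerm g)).2 hf

lemma memℓp_one_iff {f : X → ℝ} : Memℓp f 1 ↔ Summable (fun x => ‖f x‖) := by
  constructor
  · intro h
    have := h.summable (by norm_num)
    simpa [Real.rpow_one] using this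
  · intro h
    apply memℓp_gen
    simpa [Real.rpow_one] using h

noncomputable def shiftL (g : Λ) (f : E' X) : E' X :=
  ⟨fun x => f (g⁻¹ • x), by
    show Memℓp (fun x => (f : X → ℝ) (g⁻¹ • x)) 1
    exact memℓp_one_iff.2 (summable_shift (memℓp_one_iff.1 (lp.memℓp f)) g⁻¹)⟩

@[simp] lemma shiftL_apply (g : Λ) (f : E' X) (x : X) : shiftL g f x = f (g⁻¹ • x) := rfl

lemma lp1_norm (v : E' X) : ‖v‖ = ∑' x, ‖v x‖ := by
  rw [lp.norm_eq_tsum_rpow (by norm_num) v]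
  simp [Real.rpow_one]


noncomputable def dirac (x : X) : E' X := lp.single 1 x (1:ℝ)

lemma dirac_apply (x y : X) : dirac x y = if y = x then (1:ℝ) else 0 := by
  by_cases hy : y = x
  · subst hy; simp [dirac, lp.single_apply_self]
  · simp [dirac, lp.single_apply_ne _ _ _ hy, hy]

lemma dirac_coe (x : X) : ⇑(dirac x) = fun y => if y = x then (1:ℝ) else 0 := by
  funext y; exact dirac_apply x y

lemma dirac_hasSum (x : X) : HasSum (⇑(dirac x)) 1 := by
  rw [dirac_coe]
  exact hasSum_ite_eq x 1

lemma dirac_nonneg (x y : X) : 0 ≤ dirac x y := by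
  rw [dirac_apply]; split <;> norm_num

lemma shiftL_dirac (g : Λ) (x : X) : shiftL g (dirac x) = dirac (g • x) := by
  apply lp.ext
  funext y
  show (dirac x) (g⁻¹ • y) = dirac (g • x) y
  rw [dirac_apply, dirac_apply]
  congr 1
  simp only [eq_iff_iff]
  constructor
  · intro h; rw [← h, smul_inv_smul]
  · intro h; rw [h, inv_smul_smul]

set_option maxHeartbeats 1000000 in
lemma exists_almost_inv_density [Nonempty X]
    (M : InvMean (fun (g : Λ) (x : X) => g • x)) (F : Finset Λ) {ε : ℝ} (hε : 0 < ε) :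
    ∃ f : X → ℝ, Summable f ∧ (∀ x, 0 ≤ f x) ∧ (∑' x, f x) = 1 ∧
      ∀ g ∈ F, (∑' x, |f (g⁻¹ • x) - f x|) ≤ ε := by
  classical
  set D : Set (E' X) := {f | (∀ x, 0 ≤ f x) ∧ HasSum (⇑f) 1} with hD
  by_cases hall : ∃ f ∈ D, ∀ g ∈ F, ‖shiftL g f - f‖ ≤ ε
  · obtain ⟨f, ⟨hf0, hf1⟩, hfg⟩ := hall
    refine ⟨⇑f, ?_, hf0, hf1.tsum_eq, ?_⟩
    · exact Summable.of_norm (memℓp_one_iff.1 (lp.memℓp f))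
    · intro g hg
      have := hfg g hg
      rw [lp1_norm] at this
      calc (∑' x, |(f : X → ℝ) (g⁻¹ • x) - f x|) = ∑' x, ‖(shiftL g f - f) x‖ := by
            apply tsum_congr; intro x
            rw [lp.coeFn_sub, Pi.sub_apply, shiftL_apply, Real.norm_eq_abs]
        _ ≤ ε := this
  -- hard case : Hahn-Banach separation
  push_neg at hall
  exfalso
  -- the convex set of "gradients"
  set Φ : E' X → (↥F → E' X) := fun f => fun g => shiftL (g : Λ) f - f with hΦ
  set C : Set (↥F → E' X) := Φ '' D with hC
  have comb_coe : ∀ (a b : ℝ) (f₁ f₂ : E' X),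
      ⇑(a • f₁ + b • f₂) = fun x => a * f₁ x + b * f₂ x := by
    intro a b f₁ f₂
    funext x
    rw [lp.coeFn_add, Pi.add_apply, lp.coeFn_smul, lp.coeFn_smul]
    rfl
  have hCconv : Convex ℝ C := by
    rintro v₁ ⟨f₁, ⟨hf₁0, hf₁1⟩, rfl⟩ v₂ ⟨f₂, ⟨hf₂0, hf₂1⟩, rfl⟩ a b ha hb hab
    refine ⟨a • f₁ + b • f₂, ⟨?_, ?_⟩, ?_⟩
    · intro x
      rw [comb_coe]
      exact add_nonneg (mul_nonneg ha (hf₁0 x)) (mul_nonneg hb (hf₂0 x))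
    · rw [comb_coe]
      have := (hf₁1.mul_left a).add (hf₂1.mul_left b)
      simpa [mul_one, hab] using this
    · funext g
      apply lp.ext
      funext x
      show (a • f₁ + b • f₂ : E' X) ((g:Λ)⁻¹ • x) - (a • f₁ + b • f₂ : E' X) x
          = (a • (Φ f₁) + b • (Φ f₂)) g x
      have h1 : (a • (Φ f₁) + b • (Φ f₂)) g = a • (Φ f₁ g) + b • (Φ f₂ g) := rfl
      rw [h1, comb_coe, comb_coe]
      simp only [hΦ, lp.coeFn_sub, Pi.sub_apply, shiftL_apply]
      ring
  -- 0 is not in the closure of C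
  have hC0 : (0 : ↥F → E' X) ∉ closure C := by
    have hsub : closure C ⊆ {v : ↥F → E' X | ε ≤ ‖v‖} := by
      apply closure_minimal
      · rintro v ⟨f, hf, rfl⟩
        obtain ⟨g, hgF, hgv⟩ := hall f hf
        have : ‖Φ f ⟨g, hgF⟩‖ ≤ ‖Φ f‖ := norm_le_pi_norm (Φ f) ⟨g, hgF⟩
        have h2 : ε ≤ ‖Φ f ⟨g, hgF⟩‖ := le_of_lt hgv
        exact Set.mem_setOf_eq ▸ le_trans h2 this
      · exact isClosed_le continuous_const continuous_norm
    intro h0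
    have := hsub h0
    simp only [Set.mem_setOf_eq, norm_zero] at this
    linarith
  obtain ⟨φ, u, hu1, hu2⟩ :=
    geometric_hahn_banach_closed_point (hCconv.closure) isClosed_closure hC0
  rw [map_zero] at hu2
  set ψ : (↥F → E' X) →L[ℝ] ℝ := -φ with hψ
  set δ : ℝ := -u with hδ
  have hδpos : 0 < δ := by rw [hδ]; linarith
  have hψC : ∀ v ∈ C, δ < ψ v := by
    intro v hv
    have := hu1 v (subset_closure hv)
    simp only [hψ, ContinuousLinearMap.neg_apply, hδ]
    linarith
  -- the functions h g
  set h : ↥F → X → ℝ := fun g x => ψ (Pi.single g (dirac x)) with hh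
  have hbound : ∀ g x, |h g x| ≤ ‖ψ‖ := by
    intro g x
    have h1 : ‖ψ ((Pi.single g (dirac x) : ↥F → E' X))‖
        ≤ ‖ψ‖ * ‖(Pi.single g (dirac x) : ↥F → E' X)‖ :=
      ψ.le_opNorm ((Pi.single g (dirac x) : ↥F → E' X))
    have h2 : ‖(Pi.single g (dirac x) : ↥F → E' X)‖ = ‖dirac x‖ := Pi.norm_single _
    have h3 : ‖dirac x‖ = 1 := by
      have := lp.norm_single (p := 1) (by norm_num) (E := fun _ : X => ℝ) x (1:ℝ)
      simpa [dirac] using this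
    rw [← Real.norm_eq_abs, hh]
    calc ‖ψ ((Pi.single g (dirac x) : ↥F → E' X))‖
        ≤ ‖ψ‖ * ‖(Pi.single g (dirac x) : ↥F → E' X)‖ := h1
      _ = ‖ψ‖ := by rw [h2, h3, mul_one]
  -- key pointwise inequality
  have hkey : ∀ x : X, δ < ∑ g : ↥F, (h g ((g : Λ) • x) - h g x) := by
    intro x
    have hdD : dirac x ∈ D := ⟨dirac_nonneg x, dirac_hasSum x⟩
    have hvC : Φ (dirac x) ∈ C := ⟨dirac x, hdD, rfl⟩
    have := hψC _ hvC
    have hexp : ψ (Φ (dirac x)) = ∑ g : ↥F, (h g ((g : Λ) • x) - h g x) := by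
      conv_lhs => rw [← Finset.univ_sum_single (Φ (dirac x))]
      rw [map_sum]
      apply Finset.sum_congr rfl
      intro g _
      have h4 : (Pi.single g (Φ (dirac x) g) : ↥F → E' X)
          = (Pi.single g (dirac ((g:Λ) • x)) : ↥F → E' X)
            - (Pi.single g (dirac x) : ↥F → E' X) := by
        have h5 : Φ (dirac x) g = dirac ((g:Λ) • x) - dirac x := by
          show shiftL (g:Λ) (dirac x) - dirac x = _
          rw [shiftL_dirac]
        rw [h5, Pi.single_sub]
      rw [h4, map_sub]
    rw [hexp] at this
    exact this
  -- discretization of the functions h g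
  set K : ℝ := ‖ψ‖ with hK
  set d : ℝ := δ / (2 * ((F.card : ℝ) + 1)) with hd
  have hdpos : 0 < d := by
    rw [hd]; positivity
  set h' : ↥F → X → ℝ := fun g x => d * (⌊h g x / d⌋ : ℝ) with hh'
  have h'le : ∀ (g : ↥F) (x : X), h' g x ≤ h g x := by
    intro g x
    have h1 : (⌊h g x / d⌋ : ℝ) ≤ h g x / d := Int.floor_le _
    calc d * (⌊h g x / d⌋ : ℝ) ≤ d * (h g x / d) :=
          mul_le_mul_of_nonneg_left h1 hdpos.le
      _ = h g x := by rw [mul_comm, div_mul_cancel₀ _ (ne_of_gt hdpos)]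
  have h'gt : ∀ (g : ↥F) (x : X), h g x - d < h' g x := by
    intro g x
    have h1 : h g x / d < (⌊h g x / d⌋ : ℝ) + 1 := Int.lt_floor_add_one _
    have h2 : d * (h g x / d) < d * ((⌊h g x / d⌋ : ℝ) + 1) :=
      mul_lt_mul_of_pos_left h1 hdpos
    have h3 : d * (h g x / d) = h g x := by
      rw [mul_comm, div_mul_cancel₀ _ (ne_of_gt hdpos)]
    rw [h3] at h2
    show h g x - d < d * (⌊h g x / d⌋ : ℝ)
    nlinarith
  have hfr : ∀ g : ↥F, (Set.range (h' g)).Finite := by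
    intro g
    have hsub : Set.range (h' g) ⊆
        (fun n : ℤ => d * (n : ℝ)) '' (Set.Icc ⌊-K / d⌋ ⌊K / d⌋) := by
      rintro c ⟨x, rfl⟩
      refine ⟨⌊h g x / d⌋, ⟨?_, ?_⟩, rfl⟩
      · apply Int.floor_le_floor
        have h1 : -K ≤ h g x := neg_le_of_abs_le (hbound g x)
        exact (div_le_div_iff_of_pos_right hdpos).2 h1
      · apply Int.floor_le_floor
        have h1 : h g x ≤ K := le_of_abs_le (hbound g x)
        exact (div_le_div_iff_of_pos_right hdpos).2 h1
    exact ((Set.finite_Icc _ _).image _).subset hsub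
  set k : X → ℝ := fun x => ∑ g : ↥F, (h' g ((g : Λ) • x) + -(h' g x)) with hkdef
  have hsummandfr : ∀ g : ↥F,
      (Set.range (fun x => h' g ((g : Λ) • x) + -(h' g x))).Finite := fun g =>
    finRange_add (finRange_comp (hfr g) _) (finRange_neg (hfr g))
  have hkfr : (Set.range k).Finite :=
    finRange_sum' Finset.univ _ (fun g _ => hsummandfr g)
  have hcd : (F.card : ℝ) * d ≤ δ / 2 := by
    have hc0 : (0:ℝ) ≤ (F.card : ℝ) := Nat.cast_nonneg _
    have hpos : (0:ℝ) < 2 * ((F.card : ℝ) + 1) := by positivity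
    rw [hd, mul_comm, div_mul_eq_mul_div, div_le_div_iff₀ hpos (by norm_num : (0:ℝ) < 2)]
    nlinarith [hδpos.le]
  have hklow : ∀ x : X, δ / 2 ≤ k x := by
    intro x
    have hsumlb : ∑ g : ↥F, (h g ((g : Λ) • x) - h g x - d)
        ≤ ∑ g : ↥F, (h' g ((g : Λ) • x) + -(h' g x)) := by
      apply Finset.sum_le_sum
      intro g _
      have h1 := h'gt g ((g : Λ) • x)
      have h2 := h'le g x
      linarith
    have hsum_eq : ∑ g : ↥F, (h g ((g : Λ) • x) - h g x - d)
        = (∑ g : ↥F, (h g ((g : Λ) • x) - h g x)) - (F.card : ℝ) * d := by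
      rw [Finset.sum_sub_distrib, Finset.sum_const, Finset.card_univ, Fintype.card_coe,
        nsmul_eq_mul]
    have h3 := hkey x
    show δ / 2 ≤ ∑ g : ↥F, (h' g ((g : Λ) • x) + -(h' g x))
    rw [hsum_eq] at hsumlb
    linarith
  -- the integral of k is zero by invariance
  have hterm : ∀ g : ↥F,
      simpInt M.m (fun x => h' g ((g : Λ) • x) + -(h' g x)) = 0 := by
    intro g
    rw [simpInt_add M.m M.additive (finRange_comp (hfr g) _) (finRange_neg (hfr g)),
      simpInt_neg M.m M.additive (hfr g)]
    have hcomp : simpInt M.m (fun x => h' g ((g : Λ) • x)) = simpInt M.m (h' g) := by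
      apply simpInt_comp M.m M.additive (hfr g) (MulAction.toPerm (g : Λ))
      intro A
      have hpre : (⇑(MulAction.toPerm (g : Λ)) ⁻¹' A) = (fun x => (g : Λ)⁻¹ • x) '' A := by
        ext y
        constructor
        · intro hy
          exact ⟨(g : Λ) • y, hy, by simp⟩
        · rintro ⟨a, ha, rfl⟩
          show (g : Λ) • (g : Λ)⁻¹ • a ∈ A
          simpa
      rw [hpre]
      exact M.invariant (g : Λ)⁻¹ A
    rw [hcomp]
    ring
  have hint0 : simpInt M.m k = 0 := by
    rw [hkdef, simpInt_sum M.m M.additive Finset.univ _ (fun g _ => hsummandfr g)]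
    exact Finset.sum_eq_zero (fun g _ => hterm g)
  have hint1 : δ / 2 * M.m Set.univ ≤ simpInt M.m k := by
    rw [← simpInt_const M.m M.additive (δ / 2)]
    exact simpInt_mono M.m M.nonneg M.additive (finRange_const _) hkfr hklow
  rw [M.total, mul_one, hint0] at hint1
  linarith

end Day


section Fwd

open Filter
open scoped ENNReal Topology

variable {Λ X : Type*} [Group Λ] [MulAction Λ X]

lemma summable_shift' {f : X → ℝ} (hf : Summable f) (g : Λ) :
    Summable (fun x => f (g • x)) :=
  (Equiv.summable_iff (MulAction.toPerm g)).2 hf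

lemma sq_norm_diff_bound (u v : ℂ) :
    |‖u‖ ^ 2 - ‖v‖ ^ 2| ≤ 3 * ‖u - v‖ ^ 2 + 2 * ‖v‖ * ‖u - v‖ := by
  have h1 := abs_norm_sub_norm_le u v
  obtain ⟨h1a, h1b⟩ := abs_le.1 h1
  have h2 : (0:ℝ) ≤ ‖v‖ := norm_nonneg v
  have h3 : (0:ℝ) ≤ ‖u - v‖ := norm_nonneg _
  have h4 : (0:ℝ) ≤ ‖u‖ := norm_nonneg u
  rw [abs_le]
  constructor <;> nlinarith

lemma invMean_of_vectors (ξ : ℕ → X → ℂ) (h1 : ∀ n, Memℓp (ξ n) 2)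
    (h2 : ∀ n, ∑' x : X, ‖ξ n x‖ ^ 2 = 1)
    (h3 : ∀ g : Λ, Tendsto (fun n => ∑' x : X, ‖ξ n x - ξ n (g⁻¹ • x)‖ ^ 2)
      atTop (𝓝 0)) :
    Nonempty (InvMean (fun (g : Λ) (x : X) => g • x)) := by
  classical
  set a : ℕ → X → ℝ := fun n x => ‖ξ n x‖ ^ 2 with ha
  have hsum : ∀ n, Summable (a n) := by
    intro n
    have h := (h1 n).summable (by norm_num : 0 < (2:ℝ≥0∞).toReal)
    have he : (fun x => ‖ξ n x‖ ^ (2:ℝ≥0∞).toReal) = a n := by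
      funext x
      rw [show ((2:ℝ≥0∞).toReal) = (2:ℝ) by norm_num, Real.rpow_two]
    rwa [he] at h
  set μ : ℕ → Set X → ℝ := fun n A => ∑' x, Set.indicator A (a n) x with hμ
  have hμ0 : ∀ n A, 0 ≤ μ n A := by
    intro n A
    exact tsum_nonneg (fun x => Set.indicator_nonneg (fun y _ => sq_nonneg _) x)
  have hμ1 : ∀ n A, μ n A ≤ 1 := by
    intro n A
    rw [← h2 n]
    exact Summable.tsum_le_tsum
      (fun x => Set.indicator_le_self' (fun y _ => sq_nonneg _) x)
      ((hsum n).indicator A) (hsum n)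
  have hμuniv : ∀ n, μ n Set.univ = 1 := by
    intro n
    rw [hμ]
    simp only [Set.indicator_univ]
    exact h2 n
  -- pick an ultrafilter refining atTop
  obtain ⟨U, hU⟩ := Ultrafilter.exists_le (atTop : Filter ℕ)
  have hconv : ∀ A : Set X, ∃ c ∈ Set.Icc (0:ℝ) 1,
      Tendsto (fun n => μ n A) ↑U (𝓝 c) := by
    intro A
    have hle : ↑(U.map (fun n => μ n A)) ≤ Filter.principal (Set.Icc (0:ℝ) 1) := by
      rw [Ultrafilter.coe_map]
      exact Filter.le_principal_iff.2
        (Filter.mem_map.2 (Filter.Eventually.of_forall (fun n => ⟨hμ0 n A, hμ1 n A⟩)))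
    obtain ⟨c, hc, hcle⟩ := (isCompact_Icc (a := (0:ℝ)) (b := 1)).ultrafilter_le_nhds
      (U.map (fun n => μ n A)) hle
    exact ⟨c, hc, by rwa [Ultrafilter.coe_map] at hcle⟩
  choose mf hmf hten using hconv
  -- invariance estimate
  have hinv : ∀ (g : Λ) (A : Set X), mf ((fun x => g • x) '' A) = mf A := by
    intro g A
    set t : ℕ → ℝ := fun n => ∑' x, ‖ξ n x - ξ n (g • x)‖ ^ 2 with hts
    have ht : Tendsto t atTop (𝓝 0) := by
      have := h3 g⁻¹
      simpa using this
    have hsd : ∀ n, Summable (fun x => ‖ξ n x - ξ n (g • x)‖ ^ 2) := by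
      intro n
      apply Summable.of_nonneg_of_le (fun x => sq_nonneg _)
        (fun x => ?_) (((hsum n).mul_left 2).add ((summable_shift' (hsum n) g).mul_left 2))
      have hn1 := norm_sub_le (ξ n x) (ξ n (g • x))
      have h4 : (0:ℝ) ≤ ‖ξ n x‖ := norm_nonneg _
      have h5 : (0:ℝ) ≤ ‖ξ n (g • x)‖ := norm_nonneg _
      have hsq : ‖ξ n x - ξ n (g • x)‖ ^ 2 ≤ (‖ξ n x‖ + ‖ξ n (g • x)‖) ^ 2 :=
        pow_le_pow_left₀ (norm_nonneg _) hn1 2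
      simp only [ha]
      nlinarith [sq_nonneg (‖ξ n x‖ - ‖ξ n (g • x)‖)]
    have hshift : ∀ n, Summable (fun x => a n (g • x)) := fun n => summable_shift' (hsum n) g
    set D : ℕ → ℝ := fun n => ∑' x, |a n (g • x) - a n x| with hDs
    have habs : ∀ n, Summable (fun x => |a n (g • x) - a n x|) :=
      fun n => ((hshift n).sub (hsum n)).abs
    have hD0 : ∀ n, 0 ≤ D n := fun n => tsum_nonneg (fun x => abs_nonneg _)
    have hDtend : Tendsto D atTop (𝓝 0) := by
      rw [Metric.tendsto_atTop]
      intro ε hε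
      set lam : ℝ := 2 / ε with hlam
      have hlam0 : 0 < lam := by rw [hlam]; positivity
      have hDb : ∀ n, D n ≤ (3 + lam) * t n + 1 / lam := by
        intro n
        have hpt : ∀ x, |a n (g • x) - a n x| ≤
            (3 + lam) * ‖ξ n x - ξ n (g • x)‖ ^ 2 + (1 / lam) * a n x := by
          intro x
          have hb := sq_norm_diff_bound (ξ n (g • x)) (ξ n x)
          have hrev : ‖ξ n (g • x) - ξ n x‖ = ‖ξ n x - ξ n (g • x)‖ := norm_sub_rev _ _
          rw [hrev] at hb
          have hamgm : 2 * ‖ξ n x‖ * ‖ξ n x - ξ n (g • x)‖ ≤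
              lam * ‖ξ n x - ξ n (g • x)‖ ^ 2 + (1 / lam) * ‖ξ n x‖ ^ 2 := by
            have hkey := sq_nonneg (lam * ‖ξ n x - ξ n (g • x)‖ - ‖ξ n x‖)
            have hl1 : (1 / lam) * lam = 1 := by
              field_simp
            nlinarith [norm_nonneg (ξ n x - ξ n (g • x)), norm_nonneg (ξ n x),
              mul_pos hlam0 hlam0]
          simp only [ha]
          nlinarith [norm_nonneg (ξ n x - ξ n (g • x)), norm_nonneg (ξ n x)]
        calc D n ≤ ∑' x, ((3 + lam) * ‖ξ n x - ξ n (g • x)‖ ^ 2 + (1 / lam) * a n x) := by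
              apply Summable.tsum_le_tsum hpt (habs n)
              exact ((hsd n).mul_left _).add ((hsum n).mul_left _)
          _ = (3 + lam) * t n + 1 / lam := by
              rw [Summable.tsum_add ((hsd n).mul_left _) ((hsum n).mul_left _),
                tsum_mul_left, tsum_mul_left]
              have := h2 n
              rw [hts]
              rw [show (∑' x, a n x) = 1 from this]
              ring
      obtain ⟨N, hN⟩ := (Metric.tendsto_atTop.1 ht) ((ε / 2) / (3 + lam))
        (by positivity)
      refine ⟨N, fun n hn => ?_⟩
      have h6 := hN n hn
      rw [Real.dist_eq, sub_zero] at h6 ⊢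
      have ht0 : 0 ≤ t n := tsum_nonneg (fun x => sq_nonneg _)
      rw [abs_of_nonneg ht0] at h6
      rw [abs_of_nonneg (hD0 n)]
      have h7 : (3 + lam) * t n < ε / 2 := by
        rw [← lt_div_iff₀' (by positivity)]
        exact h6
      have h8 : 1 / lam = ε / 2 := by
        rw [hlam]
        field_simp
      have := hDb n
      rw [h8] at this
      linarith
    -- change of variables for the image set
    have him : ∀ n, μ n ((fun x => g • x) '' A) = ∑' x, Set.indicator A (fun y => a n (g • y)) x := by
      intro n
      simp only [hμ]
      rw [← Equiv.tsum_eq (MulAction.toPerm g) (Set.indicator ((fun x => g • x) '' A) (a n))]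
      apply tsum_congr
      intro y
      by_cases hy : y ∈ A
      · rw [Set.indicator_of_mem hy, Set.indicator_of_mem]
        · rfl
        · exact ⟨y, hy, rfl⟩
      · rw [Set.indicator_of_notMem hy, Set.indicator_of_notMem]
        intro hmem
        exact hy (((MulAction.injective g).mem_set_image).1 hmem)
    have hdiff : ∀ n, |μ n ((fun x => g • x) '' A) - μ n A| ≤ D n := by
      intro n
      rw [him n]
      simp only [hμ]
      rw [← Summable.tsum_sub ((hshift n).indicator A) ((hsum n).indicator A)]
      have hstep : |∑' x, (Set.indicator A (fun y => a n (g • y)) x - Set.indicator A (a n) x)|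
          ≤ ∑' x, |Set.indicator A (fun y => a n (g • y)) x - Set.indicator A (a n) x| := by
        have hsab : Summable (fun x => Set.indicator A (fun y => a n (g • y)) x
            - Set.indicator A (a n) x) := ((hshift n).indicator A).sub ((hsum n).indicator A)
        have := norm_tsum_le_tsum_norm (f := fun x =>
          Set.indicator A (fun y => a n (g • y)) x - Set.indicator A (a n) x)
          (by simpa using hsab.abs)
        simpa using this
      refine le_trans hstep ?_
      apply Summable.tsum_le_tsum ?_ ?_ (habs n)
      · intro x
        by_cases hx : x ∈ A
        · rw [Set.indicator_of_mem hx, Set.indicator_of_mem hx]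
        · rw [Set.indicator_of_notMem hx, Set.indicator_of_notMem hx]
          simp [abs_nonneg]
      · exact (((hshift n).indicator A).sub ((hsum n).indicator A)).abs
    have hdt : Tendsto (fun n => μ n ((fun x => g • x) '' A) - μ n A) atTop (𝓝 0) :=
      squeeze_zero_norm (fun n => by rw [Real.norm_eq_abs]; exact hdiff n) hDtend
    have hdtU : Tendsto (fun n => μ n ((fun x => g • x) '' A) - μ n A) ↑U (𝓝 0) :=
      hdt.mono_left hU
    have hcomb : Tendsto (fun n => μ n ((fun x => g • x) '' A)) ↑U (𝓝 (mf A)) := by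
      have := (hten A).add hdtU
      rw [add_zero] at this
      convert this using 2 with n
      ring
    exact tendsto_nhds_unique (hten ((fun x => g • x) '' A)) hcomb
  refine ⟨⟨mf, fun A => (hmf A).1, ?_, ?_, hinv⟩⟩
  · -- total
    have hconst : Tendsto (fun n => μ n Set.univ) ↑U (𝓝 1) := by
      have he : (fun n => μ n Set.univ) = fun _ => (1:ℝ) := funext (fun n => hμuniv n)
      rw [he]
      exact tendsto_const_nhds
    exact tendsto_nhds_unique (hten Set.univ) hconst
  · -- additive
    intro A B hAB
    have heq : ∀ n, μ n (A ∪ B) = μ n A + μ n B := by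
      intro n
      rw [hμ]
      simp only [Set.indicator_union_of_disjoint hAB]
      exact Summable.tsum_add ((hsum n).indicator A) ((hsum n).indicator B)
    have hadd : Tendsto (fun n => μ n (A ∪ B)) ↑U (𝓝 (mf A + mf B)) := by
      have := (hten A).add (hten B)
      convert this using 2 with n
      exact heq n
    exact tendsto_nhds_unique (hten (A ∪ B)) hadd

end Fwd


lemma sqrt_sub_sq_le {a b : ℝ} (ha : 0 ≤ a) (hb : 0 ≤ b) :
    (Real.sqrt a - Real.sqrt b) ^ 2 ≤ |a - b| := by
  rcases le_total b a with hba | hab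
  · rw [abs_of_nonneg (by linarith)]
    nlinarith [Real.sq_sqrt ha, Real.sq_sqrt hb, Real.sqrt_nonneg b,
      Real.sqrt_le_sqrt hba, Real.sqrt_nonneg a]
  · rw [abs_of_nonpos (by linarith)]
    nlinarith [Real.sq_sqrt ha, Real.sq_sqrt hb, Real.sqrt_nonneg a,
      Real.sqrt_le_sqrt hab, Real.sqrt_nonneg b]

set_option maxHeartbeats 1000000 in
/-- For a countable group `Λ` acting on a countable set `X`: the unitary representation
of `Λ` on `ℓ²(X)` given by `(g·ξ)(x) = ξ(g⁻¹·x)` admits a sequence of almost invariant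
unit vectors if and only if the action `Λ ↷ X` admits an invariant mean. -/
theorem almost_invariant_vectors_iff_invariant_mean
    {Λ X : Type*} [Group Λ] [Countable Λ] [Countable X] [MulAction Λ X] :
    (∃ ξ : ℕ → X → ℂ, (∀ n, Memℓp (ξ n) 2) ∧
      (∀ n, ∑' x : X, ‖ξ n x‖ ^ 2 = 1) ∧
      (∀ g : Λ, Filter.Tendsto (fun n => ∑' x : X, ‖ξ n x - ξ n (g⁻¹ • x)‖ ^ 2)
        Filter.atTop (nhds 0))) ↔
    Nonempty (InvMean (fun (g : Λ) (x : X) => g • x)) := by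
  classical
  constructor
  · rintro ⟨ξ, h1, h2, h3⟩
    exact invMean_of_vectors ξ h1 h2 h3
  · rintro ⟨M⟩
    cases isEmpty_or_nonempty X with
    | inl hX =>
      exfalso
      have h0 : M.m ∅ = 0 := by
        have := M.additive ∅ ∅ disjoint_bot_left
        simp at this
        linarith
      have hu : (Set.univ : Set X) = ∅ := Set.univ_eq_empty_iff.2 hX
      have ht := M.total
      rw [hu, h0] at ht
      exact one_ne_zero ht.symm
    | inr hX =>
      obtain ⟨e, he⟩ := exists_surjective_nat Λ
      have hchoice : ∀ n : ℕ, ∃ f : X → ℝ, Summable f ∧ (∀ x, 0 ≤ f x) ∧ (∑' x, f x) = 1 ∧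
          ∀ g ∈ (Finset.range (n+1)).image e,
            (∑' x, |f (g⁻¹ • x) - f x|) ≤ 1/((n:ℝ)+1) :=
        fun n => exists_almost_inv_density M _ (by positivity)
      choose f hfs hf0 hf1 hfg using hchoice
      have hnormsq : ∀ n x, ‖((Real.sqrt (f n x) : ℝ) : ℂ)‖ ^ 2 = f n x := by
        intro n x
        rw [Complex.norm_real, Real.norm_eq_abs, abs_of_nonneg (Real.sqrt_nonneg _),
          Real.sq_sqrt (hf0 n x)]
      refine ⟨fun n x => ((Real.sqrt (f n x) : ℝ) : ℂ), ?_, ?_, ?_⟩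
      · intro n
        apply memℓp_gen
        have he2 : (fun x => ‖((Real.sqrt (f n x) : ℝ) : ℂ)‖ ^ (2:ENNReal).toReal) = f n := by
          funext x
          rw [show ((2:ENNReal).toReal) = (2:ℝ) by norm_num, Real.rpow_two]
          exact hnormsq n x
        rw [he2]
        exact hfs n
      · intro n
        rw [← hf1 n]
        exact tsum_congr (fun x => hnormsq n x)
      · intro g
        obtain ⟨N, hN⟩ := he g
        have hpt : ∀ n x, ‖((Real.sqrt (f n x) : ℝ) : ℂ) - ((Real.sqrt (f n (g⁻¹ • x)) : ℝ) : ℂ)‖ ^ 2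
            ≤ |f n (g⁻¹ • x) - f n x| := by
          intro n x
          have hc : ((Real.sqrt (f n x) : ℝ) : ℂ) - ((Real.sqrt (f n (g⁻¹ • x)) : ℝ) : ℂ)
              = (((Real.sqrt (f n x) - Real.sqrt (f n (g⁻¹ • x))) : ℝ) : ℂ) := by
            push_cast; ring
          rw [hc, Complex.norm_real, Real.norm_eq_abs, sq_abs, abs_sub_comm]
          exact sqrt_sub_sq_le (hf0 n x) (hf0 n (g⁻¹ • x))
        have hsab : ∀ n, Summable (fun x => |f n (g⁻¹ • x) - f n x|) :=
          fun n => ((summable_shift' (hfs n) g⁻¹).sub (hfs n)).abs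
        have hlim : Filter.Tendsto (fun n : ℕ => 1/((n:ℝ)+1)) Filter.atTop (nhds 0) :=
          tendsto_one_div_add_atTop_nhds_zero_nat
        refine squeeze_zero'
          (Filter.Eventually.of_forall (fun n => tsum_nonneg (fun x => sq_nonneg _)))
          ?_ hlim
        rw [Filter.eventually_atTop]
        refine ⟨N, fun n hn => ?_⟩
        have hgmem : g ∈ (Finset.range (n+1)).image e :=
          Finset.mem_image.2 ⟨N, Finset.mem_range.2 (by omega), hN⟩
        refine le_trans ?_ (hfg n g hgmem)
        exact Summable.tsum_le_tsum (fun x => hpt n x)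
          (Summable.of_nonneg_of_le (fun x => sq_nonneg _) (fun x => hpt n x) (hsab n))
          (hsab n)
end
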